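/- Let Γ be a finite acyclic simple graph (a forest) on vertices {1,...,n}, and let A be a nonnegative matrix with A_{ii} = 0 and A_{ij} > 0 iff i ~ j in Γ. Let A^sym be the symmetric nonnegative matrix with (A^sym)_{ij} = sqrt(A_{ij} A_{ji}). Then A and A^sym have the same characteristic polynomial; in particular all eigenvalues of A are real. -/

import Mathlib

open Polynomial Matrix

/-- If every non-fixed point of a permutation is adjacent to its image in an acyclic
graph, the permutation is an involution. -/
private lemma perm_involution {n : ℕ} (G : SimpleGraph (Fin n)) (hac : G.IsAcyclic)
    (σ : Equiv.Perm (Fin n)) (hσ : ∀ i, σ i ≠ i → G.Adj (σ i) i) :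
    ∀ i, σ (σ i) = i := by
  intro i
  by_cases hfix : σ i = i
  · rw [hfix, hfix]
  by_contra h2
  have hadj : G.Adj i (σ i) := (hσ i hfix).symm
  have hbridge := (SimpleGraph.isAcyclic_iff_forall_adj_isBridge.mp hac) hadj
  rw [SimpleGraph.isBridge_iff] at hbridge
  set f : Fin n → Fin n := ⇑σ with hf
  set k := Function.minimalPeriod f i with hkdef
  have hper : Function.IsPeriodicPt f (orderOf σ) i := by
    show f^[orderOf σ] i = i
    rw [hf, Equiv.Perm.iterate_eq_pow, pow_orderOf_eq_one]
    rfl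
  have hkpos : 0 < k := hper.minimalPeriod_pos (orderOf_pos σ)
  have hkit : f^[k] i = i := Function.iterate_minimalPeriod
  have hne : ∀ a : ℕ, a ≠ 0 → a < k → f^[a] i ≠ i := fun a h0 hlt =>
    Function.not_isPeriodicPt_of_pos_of_lt_minimalPeriod h0 hlt
  set G' := G \ SimpleGraph.fromEdgeSet {s(i, σ i)} with hG'
  have step : ∀ a : ℕ, a + 1 ≤ k → Nonempty (G'.Walk (σ i) (f^[a+1] i)) := by
    intro a
    induction a with
    | zero =>
      intro _
      have h1 : f^[0+1] i = σ i := by simp [hf]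
      exact ⟨by rw [h1]⟩
    | succ a ih =>
      intro hle
      obtain ⟨W⟩ := ih (by omega)
      set x := f^[a+1] i with hx
      have hxi : x ≠ i := hne (a+1) (by omega) (by omega)
      have hσx : σ x ≠ x := by
        intro hfxx
        apply hxi
        have hkx : f^[k] i = x := by
          have hsplit : k = (k - (a+1)) + (a+1) := by omega
          rw [hsplit, Function.iterate_add_apply, ← hx]
          exact Function.iterate_fixed hfxx _
        rw [← hkx, hkit]
      have hAdj : G.Adj (σ x) x := hσ x hσx
      have hedge : s(σ x, x) ≠ s(i, σ i) := by
        intro heq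
        rw [Sym2.eq_iff] at heq
        rcases heq with ⟨h3, h4⟩ | ⟨h3, h4⟩
        · exact h2 (by rw [h4] at h3; exact h3)
        · exact hxi h4

      have hadj' : G'.Adj x (σ x) := by
        rw [hG']
        simp only [SimpleGraph.sdiff_adj, SimpleGraph.fromEdgeSet_adj,
          Set.mem_singleton_iff]
        refine ⟨hAdj.symm, ?_⟩
        rintro ⟨hmem, -⟩
        exact hedge (by rw [Sym2.eq_swap] at hmem; exact hmem)
      have hstep : f^[a+1+1] i = σ x := by
        rw [Function.iterate_succ_apply', ← hx]
      exact ⟨by rw [hstep]; exact W.append hadj'.toWalk⟩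
  obtain ⟨W⟩ := step (k-1) (by omega)
  have hkk : k - 1 + 1 = k := by omega
  rw [hkk, hkit] at W
  exact hbridge ⟨W.reverse⟩

private lemma prod_key {n : ℕ} (G : SimpleGraph (Fin n)) (hac : G.IsAcyclic)
    (A : Matrix (Fin n) (Fin n) ℝ) (hnn : ∀ i j, 0 ≤ A i j)
    (hdiag : ∀ i, A i i = 0) (hadj : ∀ i j, 0 < A i j ↔ G.Adj i j)
    (σ : Equiv.Perm (Fin n)) :
    ∏ i, (Matrix.charmatrix A) (σ i) i
      = ∏ i, (Matrix.charmatrix (Matrix.of fun i j => Real.sqrt (A i j * A j i))) (σ i) i := by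
  set B : Matrix (Fin n) (Fin n) ℝ := Matrix.of fun i j => Real.sqrt (A i j * A j i) with hB
  have hBentry : ∀ i j, B i j = Real.sqrt (A i j * A j i) := fun _ _ => rfl
  have hBnn : ∀ i j, 0 ≤ B i j := fun i j => Real.sqrt_nonneg _
  classical
  rw [← Finset.prod_filter_mul_prod_filter_not Finset.univ (fun i => σ i = i)
    (fun i => (Matrix.charmatrix A) (σ i) i),
    ← Finset.prod_filter_mul_prod_filter_not Finset.univ (fun i => σ i = i)
    (fun i => (Matrix.charmatrix B) (σ i) i)]
  set S := Finset.univ.filter (fun i => ¬ σ i = i) with hS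
  congr 1
  · apply Finset.prod_congr rfl
    intro i hi
    rw [Finset.mem_filter] at hi
    rw [hi.2, Matrix.charmatrix_apply_eq, Matrix.charmatrix_apply_eq, hdiag,
      hBentry, hdiag, zero_mul, Real.sqrt_zero]
  · have hSm : ∀ i, i ∈ S ↔ σ i ≠ i := by
      intro i; rw [hS, Finset.mem_filter]; simp
    have hterm : ∀ (M : Matrix (Fin n) (Fin n) ℝ), ∀ i ∈ S,
        (Matrix.charmatrix M) (σ i) i = -C (M (σ i) i) := by
      intro M i hi
      exact Matrix.charmatrix_apply_ne _ _ _ ((hSm i).mp hi)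
    rw [Finset.prod_congr rfl (hterm A), Finset.prod_congr rfl (hterm B)]
    have transform : ∀ (M : Matrix (Fin n) (Fin n) ℝ),
        ∏ i ∈ S, (-C (M (σ i) i)) = (-1 : ℝ[X])^S.card * C (∏ i ∈ S, M (σ i) i) := by
      intro M
      rw [map_prod, ← Finset.prod_const, ← Finset.prod_mul_distrib]
      exact Finset.prod_congr rfl fun i _ => (neg_one_mul _).symm
    rw [transform A, transform B]
    have hPQ : ∏ i ∈ S, A (σ i) i = ∏ i ∈ S, B (σ i) i := by
      by_cases hz : ∀ i ∈ S, 0 < A (σ i) i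
      · have hGadj : ∀ i, σ i ≠ i → G.Adj (σ i) i := fun i hi =>
          (hadj _ _).mp (hz i ((hSm i).mpr hi))
        have hinv := perm_involution G hac σ hGadj
        have hre : ∏ i ∈ S, A i (σ i) = ∏ i ∈ S, A (σ i) i := by
          apply Finset.prod_nbij' σ σ
          · intro a ha
            rw [hSm] at ha ⊢
            intro hcon
            rw [hinv] at hcon
            exact ha hcon.symm
          · intro a ha
            rw [hSm] at ha ⊢
            intro hcon
            rw [hinv] at hcon
            exact ha hcon.symm
          · intro a _; exact hinv a
          · intro a _; exact hinv a
          · intro a _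
            rw [hinv a]
        have hP : (0:ℝ) ≤ ∏ i ∈ S, A (σ i) i := Finset.prod_nonneg fun i _ => hnn _ _
        have hQ : (0:ℝ) ≤ ∏ i ∈ S, B (σ i) i := Finset.prod_nonneg fun i _ => hBnn _ _
        have hsq : (∏ i ∈ S, A (σ i) i)^2 = (∏ i ∈ S, B (σ i) i)^2 := by
          calc (∏ i ∈ S, A (σ i) i)^2
              = (∏ i ∈ S, A (σ i) i) * (∏ i ∈ S, A i (σ i)) := by rw [sq, hre]
            _ = ∏ i ∈ S, (A (σ i) i * A i (σ i)) := (Finset.prod_mul_distrib).symm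
            _ = ∏ i ∈ S, (B (σ i) i)^2 := by
                apply Finset.prod_congr rfl
                intro i _
                rw [hBentry, Real.sq_sqrt (mul_nonneg (hnn _ _) (hnn _ _))]
            _ = (∏ i ∈ S, B (σ i) i)^2 := Finset.prod_pow _ _ _
        calc ∏ i ∈ S, A (σ i) i = Real.sqrt ((∏ i ∈ S, A (σ i) i)^2) :=
              (Real.sqrt_sq hP).symm
          _ = Real.sqrt ((∏ i ∈ S, B (σ i) i)^2) := by rw [hsq]
          _ = ∏ i ∈ S, B (σ i) i := Real.sqrt_sq hQ
      · push_neg at hz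
        obtain ⟨i, hi, h0⟩ := hz
        have hA0 : A (σ i) i = 0 := le_antisymm h0 (hnn _ _)
        have hB0 : B (σ i) i = 0 := by
          rw [hBentry, hA0, zero_mul, Real.sqrt_zero]
        rw [Finset.prod_eq_zero (f := fun j => A (σ j) j) hi hA0,
          Finset.prod_eq_zero (f := fun j => B (σ j) j) hi hB0]
    rw [hPQ]

/-- Let `Γ` be a finite acyclic simple graph (a forest) on `{1,…,n}` and `A` a
nonnegative matrix with zero diagonal and `A i j > 0` iff `i ~ j` in `Γ`.
Let `A^sym` be the symmetric matrix with entries `√(A i j * A j i)`.  Then `A`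
and `A^sym` have the same characteristic polynomial; in particular all (complex)
eigenvalues of `A` are real. -/
theorem stmt10 {n : ℕ} (G : SimpleGraph (Fin n)) (hac : G.IsAcyclic)
    (A : Matrix (Fin n) (Fin n) ℝ) (hnn : ∀ i j, 0 ≤ A i j)
    (hdiag : ∀ i, A i i = 0) (hadj : ∀ i j, 0 < A i j ↔ G.Adj i j) :
    A.charpoly = (Matrix.of fun i j => Real.sqrt (A i j * A j i)).charpoly ∧
      ∀ μ : ℂ, ((A.map ((↑) : ℝ → ℂ)).charpoly).IsRoot μ → μ.im = 0 := by
  set B : Matrix (Fin n) (Fin n) ℝ := Matrix.of fun i j => Real.sqrt (A i j * A j i) with hB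
  have hBentry : ∀ i j, B i j = Real.sqrt (A i j * A j i) := fun _ _ => rfl
  have h1 : A.charpoly = B.charpoly := by
    unfold Matrix.charpoly
    rw [Matrix.det_apply, Matrix.det_apply]
    exact Finset.sum_congr rfl fun σ _ => by
      rw [prod_key G hac A hnn hdiag hadj σ]
  refine ⟨h1, ?_⟩
  intro μ hroot
  have hBsymm : ∀ i j, B j i = B i j := fun i j => by
    rw [hBentry, hBentry, mul_comm]
  set M : Matrix (Fin n) (Fin n) ℂ := B.map ((↑) : ℝ → ℂ) with hM
  have hroot' : M.charpoly.IsRoot μ := by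
    have e1 : (A.map ((↑) : ℝ → ℂ)).charpoly = A.charpoly.map Complex.ofRealHom :=
      Matrix.charpoly_map A Complex.ofRealHom
    have e2 : M.charpoly = B.charpoly.map Complex.ofRealHom :=
      Matrix.charpoly_map B Complex.ofRealHom
    rw [e2, ← h1, ← e1]
    exact hroot
  have hdet : (μ • (1 : Matrix (Fin n) (Fin n) ℂ) - M).det = 0 := by
    have heq : μ • (1 : Matrix (Fin n) (Fin n) ℂ) - M
        = (Matrix.charmatrix M).map (Polynomial.evalRingHom μ) := by
      ext i j
      by_cases hij : i = j
      · subst hij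
        simp [Matrix.charmatrix_apply_eq, Matrix.one_apply]
      · simp [Matrix.charmatrix_apply_ne _ _ _ hij, Matrix.one_apply_ne hij]
    have hmd := RingHom.map_det (Polynomial.evalRingHom μ) (Matrix.charmatrix M)
    rw [RingHom.mapMatrix_apply] at hmd
    rw [heq, ← hmd]
    exact hroot'
  obtain ⟨v, hv0, hv⟩ := (Matrix.exists_mulVec_eq_zero_iff).mpr hdet
  have hMv : M.mulVec v = μ • v := by
    rw [Matrix.sub_mulVec, sub_eq_zero, Matrix.smul_mulVec, Matrix.one_mulVec] at hv
    exact hv.symm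
  have hMH : Mᴴ = M := by
    ext i j
    rw [Matrix.conjTranspose_apply, hM, Matrix.map_apply, Matrix.map_apply,
      hBsymm]
    exact Complex.conj_ofReal _
  have key : star v ⬝ᵥ M.mulVec v = star (star v ⬝ᵥ M.mulVec v) := by
    conv_lhs => rw [Matrix.star_dotProduct]
    rw [Matrix.star_mulVec, hMH, ← Matrix.dotProduct_mulVec]
  have hcself : star (star v ⬝ᵥ v) = star v ⬝ᵥ v := by
    conv_rhs => rw [Matrix.star_dotProduct]
  rw [hMv, dotProduct_smul, star_smul] at key
  have hc0 : star v ⬝ᵥ v ≠ 0 := by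
    open ComplexOrder in
    exact fun h => hv0 (dotProduct_star_self_eq_zero.mp h)
  have hμ : μ = star μ := by
    apply mul_right_cancel₀ hc0
    calc μ * (star v ⬝ᵥ v) = μ • (star v ⬝ᵥ v) := rfl
      _ = star μ • star (star v ⬝ᵥ v) := key
      _ = star μ * (star v ⬝ᵥ v) := by rw [hcself, smul_eq_mul]
  have : (starRingEnd ℂ) μ = μ := hμ.symm
  exact Complex.conj_eq_iff_im.mp this
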